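/- Let d ≥ 2 and a ≥ b > 0 with a < d and a + b > d. If f, g : ℤ^d → ℝ satisfy |f(x)| ≤ C₁‖x‖^{-a} and |g(x)| ≤ C₂‖x‖^{-b} for all nonzero x (and are bounded at 0), then there is a constant C = C(a,b,d,C₁,C₂) such that for all x ∈ ℤ^d, |∑_{y∈ℤ^d} f(y) g(x−y)| ≤ C ‖x‖^{d−(a+b)} for x ≠ 0. -/

import Mathlib

/-- Euclidean norm of a point of `ℤ^d`. -/
noncomputable def znorm {d : ℕ} (x : Fin d → ℤ) : ℝ :=
  Real.sqrt (∑ i, ((x i : ℝ)) ^ 2)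

section Aux
variable {d : ℕ}

noncomputable def emb (x : Fin d → ℤ) : EuclideanSpace ℝ (Fin d) := WithLp.toLp 2 (fun i => (x i : ℝ))

lemma znorm_eq (x : Fin d → ℤ) : znorm x = ‖emb x‖ := by
  rw [EuclideanSpace.norm_eq, znorm]
  congr 1; apply Finset.sum_congr rfl; intro i _
  rw [Real.norm_eq_abs, sq_abs]; rfl

lemma emb_sub (x y : Fin d → ℤ) : emb (x - y) = emb x - emb y := by
  ext i; simp [emb]

lemma znorm_nonneg' (x : Fin d → ℤ) : 0 ≤ znorm x := Real.sqrt_nonneg _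

lemma znorm_sub_ge (x y : Fin d → ℤ) : znorm x - znorm y ≤ znorm (x - y) := by
  rw [znorm_eq, znorm_eq, znorm_eq, emb_sub]
  exact norm_sub_norm_le _ _

lemma znorm_sub_comm (x y : Fin d → ℤ) : znorm (x - y) = znorm (y - x) := by
  rw [znorm_eq, znorm_eq, emb_sub, emb_sub, norm_sub_rev]

lemma one_le_znorm' {x : Fin d → ℤ} (hx : x ≠ 0) : 1 ≤ znorm x := by
  obtain ⟨i, hi⟩ : ∃ i, x i ≠ 0 := by
    by_contra h; push_neg at h; exact hx (funext h)
  have h1 : (1 : ℝ) ≤ ((x i : ℝ)) ^ 2 := by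
    have h : (1 : ℤ) ≤ (x i) ^ 2 := by
      rcases lt_or_gt_of_ne hi with h | h <;> nlinarith
    calc (1:ℝ) = ((1:ℤ):ℝ) := by norm_num
      _ ≤ (((x i)^2 : ℤ) : ℝ) := by exact_mod_cast h
      _ = ((x i : ℝ))^2 := by push_cast; ring
  have h2 : ((x i : ℝ)) ^ 2 ≤ ∑ j, ((x j : ℝ)) ^ 2 :=
    Finset.single_le_sum (f := fun j => ((x j:ℝ))^2) (fun j _ => by positivity) (Finset.mem_univ i)
  calc (1:ℝ) = Real.sqrt 1 := (Real.sqrt_one).symm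
    _ ≤ znorm x := Real.sqrt_le_sqrt (by linarith)

lemma znorm_pos {x : Fin d → ℤ} (hx : x ≠ 0) : 0 < znorm x :=
  lt_of_lt_of_le one_pos (one_le_znorm' hx)

lemma ne_zero_of_znorm_pos {x : Fin d → ℤ} (h : 0 < znorm x) : x ≠ 0 := by
  rintro rfl
  simp [znorm] at h

lemma abs_coord_le (x : Fin d → ℤ) (i : Fin d) : |(x i : ℝ)| ≤ znorm x := by
  rw [← Real.sqrt_sq_eq_abs]
  exact Real.sqrt_le_sqrt (Finset.single_le_sum (f := fun j => ((x j:ℝ))^2) (fun j _ => by positivity) (Finset.mem_univ i))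



end Aux

lemma card_le {d : ℕ} (T : ℝ) (hT : 0 ≤ T) (u : Finset (Fin d → ℤ))
    (hu : ∀ y ∈ u, znorm y ≤ T) : (u.card : ℝ) ≤ (2*T+1)^d := by
  classical
  set m : ℤ := ⌊T⌋ with hm
  have hm0 : 0 ≤ m := Int.le_floor.2 (by exact_mod_cast hT)
  have hsub : u ⊆ Fintype.piFinset (fun _ : Fin d => Finset.Icc (-m) m) := by
    intro y hy
    rw [Fintype.mem_piFinset]
    intro i
    have h := (abs_coord_le y i).trans (hu y hy)
    rw [abs_le] at h
    rw [Finset.mem_Icc]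
    constructor
    · have : -m ≤ y i := by
        have := Int.le_floor.2 (show ((-(y i) : ℤ) : ℝ) ≤ T by push_cast; linarith [h.1])
        omega
      exact this
    · exact Int.le_floor.2 (by exact_mod_cast h.2)
  have hcard : u.card ≤ (2*m+1).toNat ^ d := by
    have := Finset.card_le_card hsub
    rwa [Fintype.card_piFinset, Finset.prod_const, Int.card_Icc, Finset.card_univ,
      Fintype.card_fin, show m + 1 - -m = 2*m+1 by ring] at this
  calc (u.card : ℝ) ≤ ((2*m+1).toNat ^ d : ℕ) := by exact_mod_cast hcard
    _ = ((2*m+1 : ℤ) : ℝ) ^ d := by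
        rw [Nat.cast_pow]
        congr 1
        exact_mod_cast Int.toNat_of_nonneg (by omega)
    _ ≤ (2*T+1)^d := by
        apply pow_le_pow_left₀ (by positivity)
        push_cast
        have : (m : ℝ) ≤ T := Int.floor_le T
        linarith

lemma shell_sum {d : ℕ} (s A B : ℝ) (hs : 0 ≤ s) (hA : 0 < A) (hB : 0 ≤ B)
    (u : Finset (Fin d → ℤ)) :
    ∑ y ∈ u, (if A ≤ znorm y ∧ znorm y < B then znorm y ^ (-s) else 0)
      ≤ (2*B+1)^d * A^(-s) := by
  classical
  rw [Finset.sum_ite, Finset.sum_const_zero, add_zero]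
  have h1 : ∀ y ∈ u.filter (fun y => A ≤ znorm y ∧ znorm y < B), znorm y ^ (-s) ≤ A ^ (-s) := by
    intro y hy
    rw [Finset.mem_filter] at hy
    exact Real.rpow_le_rpow_of_nonpos hA hy.2.1 (by linarith)
  calc ∑ y ∈ u.filter (fun y => A ≤ znorm y ∧ znorm y < B), znorm y ^ (-s)
      ≤ ∑ _y ∈ u.filter (fun y => A ≤ znorm y ∧ znorm y < B), A ^ (-s) :=
        Finset.sum_le_sum h1
    _ = (u.filter (fun y => A ≤ znorm y ∧ znorm y < B)).card * A ^ (-s) := by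
        rw [Finset.sum_const, nsmul_eq_mul]
    _ ≤ (2*B+1)^d * A^(-s) := by
        apply mul_le_mul_of_nonneg_right _ (Real.rpow_nonneg hA.le _)
        apply card_le B hB
        intro y hy
        rw [Finset.mem_filter] at hy
        exact hy.2.2.le

/-- dyadic bracketing of a real `v ≥ 1`. -/
lemma dyadic (v : ℝ) (hv : 1 ≤ v) :
    (2:ℝ)^(Nat.log 2 ⌊v⌋₊) ≤ v ∧ v < 2^(Nat.log 2 ⌊v⌋₊ + 1) := by
  have hn : 1 ≤ ⌊v⌋₊ := (Nat.one_le_floor_iff v).mpr hv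
  constructor
  · calc ((2:ℝ)^(Nat.log 2 ⌊v⌋₊)) = ((2^(Nat.log 2 ⌊v⌋₊) : ℕ) : ℝ) := by push_cast; ring
      _ ≤ (⌊v⌋₊ : ℝ) := by exact_mod_cast Nat.pow_log_le_self 2 (by omega)
      _ ≤ v := Nat.floor_le (by linarith)
  · have h := Nat.lt_pow_succ_log_self (by norm_num : 1 < 2) ⌊v⌋₊
    calc v < (⌊v⌋₊ : ℝ) + 1 := Nat.lt_floor_add_one v
      _ ≤ ((2:ℕ)^(Nat.log 2 ⌊v⌋₊ + 1) : ℕ) := by exact_mod_cast Nat.succ_le_of_lt h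
      _ = (2:ℝ)^(Nat.log 2 ⌊v⌋₊ + 1) := by push_cast; ring

lemma pow_rpow_comm (k : ℕ) (t : ℝ) : ((2:ℝ)^k)^t = ((2:ℝ)^t)^k := by
  rw [← Real.rpow_natCast (2:ℝ) k, ← Real.rpow_mul (by norm_num), mul_comm,
    Real.rpow_mul (by norm_num), Real.rpow_natCast]

lemma shell_bound {d : ℕ} (s : ℝ) (hs : 0 ≤ s) (T : ℝ) (hT : 1/2 ≤ T) (k : ℕ)
    (u : Finset (Fin d → ℤ)) :
    ∑ y ∈ u, (if 2^k * T ≤ znorm y ∧ znorm y < 2^(k+1) * T then znorm y ^ (-s) else 0)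
      ≤ 6^d * (((2:ℝ)^((d:ℝ)-s))^k * T^((d:ℝ)-s)) := by
  have hT0 : 0 < T := by linarith
  have h2k : (0:ℝ) < 2^k := by positivity
  have h := shell_sum s (2^k * T) (2^(k+1) * T) hs (by positivity) (by positivity) u
  refine h.trans ?_
  have hcount : (2*(2^(k+1)*T)+1 : ℝ) ≤ 6 * (2^k * T) := by
    have : (1:ℝ) ≤ 2*T := by linarith
    have h1 : (2:ℝ)^(k+1) = 2 * 2^k := by ring
    have h2 : (1:ℝ) ≤ 2^k := one_le_pow₀ (by norm_num)
    nlinarith [mul_le_mul_of_nonneg_left this (le_of_lt h2k)]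
  calc (2*(2^(k+1)*T)+1 : ℝ)^d * (2^k*T)^(-s)
      ≤ (6*(2^k*T))^d * (2^k*T)^(-s) := by
        apply mul_le_mul_of_nonneg_right (pow_le_pow_left₀ (by positivity) hcount d)
          (Real.rpow_nonneg (by positivity) _)
    _ = 6^d * ((2^k*T)^d * (2^k*T)^(-s)) := by rw [mul_pow]; ring
    _ = 6^d * (2^k*T)^((d:ℝ)-s) := by
        rw [← Real.rpow_natCast ((2:ℝ)^k*T) d, ← Real.rpow_add (by positivity)]
        norm_num [sub_eq_add_neg]
    _ = 6^d * (((2:ℝ)^((d:ℝ)-s))^k * T^((d:ℝ)-s)) := by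
        rw [Real.mul_rpow (by positivity) hT0.le, pow_rpow_comm]

lemma ballSum {d : ℕ} (s : ℝ) (hs0 : 0 ≤ s) (hsd : s < (d:ℝ)) :
    ∃ K : ℝ, 0 ≤ K ∧ ∀ T : ℝ, 1/2 ≤ T → ∀ u : Finset (Fin d → ℤ),
      ∑ y ∈ u, (if y ≠ 0 ∧ znorm y ≤ T then znorm y ^ (-s) else 0) ≤ K * T^((d:ℝ)-s) := by
  classical
  set q : ℝ := (2:ℝ)^((d:ℝ)-s) with hqdef
  have hq0 : 0 < q := Real.rpow_pos_of_pos two_pos _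
  have hq1 : 1 < q := by
    rw [hqdef, show (1:ℝ) = (2:ℝ)^(0:ℝ) by rw [Real.rpow_zero]]
    exact Real.rpow_lt_rpow_of_exponent_lt one_lt_two (by linarith)
  have hq1' : (0:ℝ) < q - 1 := by linarith
  refine ⟨6^d * (q*q/(q-1)), by positivity, ?_⟩
  intro T hT u
  have hT0 : 0 < T := by linarith
  -- choose m with T ≤ 2^m ≤ 2T
  obtain ⟨m, hm1, hm2⟩ : ∃ m : ℕ, T ≤ 2^m ∧ (2:ℝ)^m ≤ 2*T := by
    by_cases hT1 : T ≤ 1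
    · exact ⟨0, by simpa using hT1, by simp; linarith⟩
    · push_neg at hT1
      obtain ⟨h1, h2⟩ := dyadic T hT1.le
      exact ⟨Nat.log 2 ⌊T⌋₊ + 1, h2.le, by rw [pow_succ]; linarith⟩
  have hpt : ∀ y ∈ u, (if y ≠ 0 ∧ znorm y ≤ T then znorm y ^ (-s) else 0)
      ≤ ∑ k ∈ Finset.range (m+1),
        (if 2^k * 1 ≤ znorm y ∧ znorm y < 2^(k+1) * 1 then znorm y ^ (-s) else 0) := by
    intro y _
    split_ifs with h
    · obtain ⟨hy0, hyT⟩ := h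
      have hv : 1 ≤ znorm y := one_le_znorm' hy0
      obtain ⟨hk1, hk2⟩ := dyadic (znorm y) hv
      set k₀ := Nat.log 2 ⌊znorm y⌋₊ with hk₀
      have hk0m : k₀ ≤ m := by
        have : (2:ℝ)^k₀ ≤ 2^m := le_trans hk1 (le_trans hyT hm1)
        exact (pow_le_pow_iff_right₀ one_lt_two).1 this
      have heq : (if 2^k₀ * 1 ≤ znorm y ∧ znorm y < 2^(k₀+1) * 1 then znorm y ^ (-s) else 0)
          = znorm y ^ (-s) := if_pos (by rw [mul_one, mul_one]; exact ⟨hk1, hk2⟩)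
      have hmem : k₀ ∈ Finset.range (m+1) := Finset.mem_range.2 (by omega)
      have hnn : ∀ k : ℕ,
          0 ≤ (if 2^k * 1 ≤ znorm y ∧ znorm y < 2^(k+1) * 1 then znorm y ^ (-s) else 0) := by
        intro k
        split_ifs with h'
        exacts [Real.rpow_nonneg (znorm_nonneg' y) _, le_rfl]
      exact le_trans (le_of_eq heq.symm) (Finset.single_le_sum (fun k _ => hnn k) hmem)
    · apply Finset.sum_nonneg
      intro k _
      split_ifs with h'
      exacts [Real.rpow_nonneg (znorm_nonneg' y) _, le_rfl]
  calc ∑ y ∈ u, (if y ≠ 0 ∧ znorm y ≤ T then znorm y ^ (-s) else 0)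
      ≤ ∑ y ∈ u, ∑ k ∈ Finset.range (m+1),
          (if 2^k * 1 ≤ znorm y ∧ znorm y < 2^(k+1) * 1 then znorm y ^ (-s) else 0) :=
        Finset.sum_le_sum hpt
    _ = ∑ k ∈ Finset.range (m+1), ∑ y ∈ u,
          (if 2^k * 1 ≤ znorm y ∧ znorm y < 2^(k+1) * 1 then znorm y ^ (-s) else 0) :=
        Finset.sum_comm
    _ ≤ ∑ k ∈ Finset.range (m+1), 6^d * (q^k * (1:ℝ)^((d:ℝ)-s)) := by
        apply Finset.sum_le_sum
        intro k _
        exact shell_bound s hs0 1 (by norm_num) k u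
    _ = 6^d * ∑ k ∈ Finset.range (m+1), q^k := by
        rw [Finset.mul_sum]
        apply Finset.sum_congr rfl
        intro k _
        rw [Real.one_rpow, mul_one]
    _ ≤ 6^d * (q*q/(q-1)) * T^((d:ℝ)-s) := by
        have hgeo : ∑ k ∈ Finset.range (m+1), q^k = (q^(m+1) - 1)/(q-1) :=
          geom_sum_eq (ne_of_gt hq1) (m+1)
        have hqm : q^m ≤ q * T^((d:ℝ)-s) := by
          have h1 : q^m = ((2:ℝ)^m)^((d:ℝ)-s) := (pow_rpow_comm m _).symm
          have h2 : ((2:ℝ)^m)^((d:ℝ)-s) ≤ (2*T)^((d:ℝ)-s) :=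
            Real.rpow_le_rpow (by positivity) hm2 (by linarith)
          have h3 : (2*T)^((d:ℝ)-s) = q * T^((d:ℝ)-s) := by
            rw [Real.mul_rpow (by norm_num) hT0.le]
          rw [h1]; rw [h3] at h2; exact h2
        rw [hgeo]
        have h4 : q^(m+1) - 1 ≤ q*q*T^((d:ℝ)-s) := by
          have := mul_le_mul_of_nonneg_left hqm hq0.le
          have hq2 : q^(m+1) = q * q^m := by ring
          nlinarith
        have h5 : (q^(m+1) - 1)/(q-1) ≤ (q*q*T^((d:ℝ)-s))/(q-1) :=
          div_le_div_of_nonneg_right h4 hq1'.le |>.trans_eq rfl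
        have h6 : (q*q*T^((d:ℝ)-s))/(q-1) = q*q/(q-1)*T^((d:ℝ)-s) := by ring
        calc (6:ℝ)^d * ((q^(m+1) - 1)/(q-1)) ≤ 6^d * (q*q/(q-1)*T^((d:ℝ)-s)) := by
              apply mul_le_mul_of_nonneg_left _ (by positivity)
              rw [← h6]; exact h5
          _ = 6^d * (q*q/(q-1)) * T^((d:ℝ)-s) := by ring

lemma tailSum {d : ℕ} (s : ℝ) (hs0 : 0 ≤ s) (hsd : (d:ℝ) < s) :
    ∃ K : ℝ, 0 ≤ K ∧ ∀ T : ℝ, 1/2 ≤ T → ∀ u : Finset (Fin d → ℤ),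
      ∑ y ∈ u, (if T < znorm y then znorm y ^ (-s) else 0) ≤ K * T^((d:ℝ)-s) := by
  classical
  set q : ℝ := (2:ℝ)^((d:ℝ)-s) with hqdef
  have hq0 : 0 < q := Real.rpow_pos_of_pos two_pos _
  have hq1 : q < 1 := Real.rpow_lt_one_of_one_lt_of_neg one_lt_two (by linarith)
  have hq1' : (0:ℝ) < 1 - q := by linarith
  refine ⟨6^d * (1-q)⁻¹, by positivity, ?_⟩
  intro T hT u
  have hT0 : 0 < T := by linarith
  set m : ℕ := u.sup (fun y => Nat.log 2 ⌊znorm y / T⌋₊) with hm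
  have hpt : ∀ y ∈ u, (if T < znorm y then znorm y ^ (-s) else 0)
      ≤ ∑ k ∈ Finset.range (m+1),
        (if 2^k * T ≤ znorm y ∧ znorm y < 2^(k+1) * T then znorm y ^ (-s) else 0) := by
    intro y hy
    have hnn : ∀ k : ℕ,
        0 ≤ (if 2^k * T ≤ znorm y ∧ znorm y < 2^(k+1) * T then znorm y ^ (-s) else 0) := by
      intro k
      split_ifs with h'
      exacts [Real.rpow_nonneg (znorm_nonneg' y) _, le_rfl]
    split_ifs with h
    · have hv : 1 ≤ znorm y / T := (one_le_div hT0).2 h.le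
      obtain ⟨hk1, hk2⟩ := dyadic _ hv
      set k₀ := Nat.log 2 ⌊znorm y / T⌋₊ with hk₀
      have hk0m : k₀ ≤ m := Finset.le_sup (f := fun y => Nat.log 2 ⌊znorm y / T⌋₊) hy
      have hmem : k₀ ∈ Finset.range (m+1) := Finset.mem_range.2 (by omega)
      have heq : (if 2^k₀ * T ≤ znorm y ∧ znorm y < 2^(k₀+1) * T then znorm y ^ (-s) else 0)
          = znorm y ^ (-s) := by
        apply if_pos
        constructor
        · calc (2:ℝ)^k₀ * T ≤ (znorm y / T) * T := by
                exact mul_le_mul_of_nonneg_right hk1 hT0.le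
            _ = znorm y := by field_simp
        · calc znorm y = (znorm y / T) * T := by field_simp
            _ < 2^(k₀+1) * T := by exact mul_lt_mul_of_pos_right hk2 hT0
      exact le_trans (le_of_eq heq.symm) (Finset.single_le_sum (fun k _ => hnn k) hmem)
    · exact Finset.sum_nonneg (fun k _ => hnn k)
  calc ∑ y ∈ u, (if T < znorm y then znorm y ^ (-s) else 0)
      ≤ ∑ y ∈ u, ∑ k ∈ Finset.range (m+1),
          (if 2^k * T ≤ znorm y ∧ znorm y < 2^(k+1) * T then znorm y ^ (-s) else 0) :=
        Finset.sum_le_sum hpt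
    _ = ∑ k ∈ Finset.range (m+1), ∑ y ∈ u,
          (if 2^k * T ≤ znorm y ∧ znorm y < 2^(k+1) * T then znorm y ^ (-s) else 0) :=
        Finset.sum_comm
    _ ≤ ∑ k ∈ Finset.range (m+1), 6^d * (q^k * T^((d:ℝ)-s)) :=
        Finset.sum_le_sum (fun k _ => shell_bound s hs0 T hT k u)
    _ = 6^d * T^((d:ℝ)-s) * ∑ k ∈ Finset.range (m+1), q^k := by
        rw [Finset.mul_sum]
        apply Finset.sum_congr rfl
        intro k _
        ring
    _ ≤ 6^d * T^((d:ℝ)-s) * (1-q)⁻¹ := by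
        apply mul_le_mul_of_nonneg_left _ (by positivity)
        calc ∑ k ∈ Finset.range (m+1), q^k
            ≤ ∑' k : ℕ, q^k :=
              Summable.sum_le_tsum _ (fun k _ => pow_nonneg hq0.le k)
                (summable_geometric_of_lt_one hq0.le hq1)
          _ = (1-q)⁻¹ := tsum_geometric_of_lt_one hq0.le hq1
    _ = 6^d * (1-q)⁻¹ * T^((d:ℝ)-s) := by ring

lemma znorm_zero {d : ℕ} : znorm (0 : Fin d → ℤ) = 0 := by simp [znorm]

lemma ne_zero_of_lt_znorm {d : ℕ} {x : Fin d → ℤ} (h : 0 < znorm x) : x ≠ 0 := by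
  rintro rfl; rw [znorm_zero] at h; exact lt_irrefl _ h

lemma ballSumW {d : ℕ} (s : ℝ) (hs0 : 0 ≤ s) (hsd : s < (d:ℝ)) :
    ∃ K : ℝ, 0 ≤ K ∧ ∀ r : ℝ, 1/2 ≤ r → ∀ u : Finset (Fin d → ℤ),
      ∑ y ∈ u, (if znorm y ≤ r then (if y = 0 then (1:ℝ) else znorm y ^ (-s)) else 0)
        ≤ 1 + K * r^((d:ℝ)-s) := by
  classical
  obtain ⟨K, hK0, hK⟩ := ballSum (d := d) s hs0 hsd
  refine ⟨K, hK0, ?_⟩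
  intro r hr u
  have hpt : ∀ y ∈ u, (if znorm y ≤ r then (if y = 0 then (1:ℝ) else znorm y ^ (-s)) else 0)
      ≤ (if y = 0 then (1:ℝ) else 0) + (if y ≠ 0 ∧ znorm y ≤ r then znorm y ^ (-s) else 0) := by
    intro y _
    by_cases hy : y = 0
    · subst hy
      have h0r : znorm (0 : Fin d → ℤ) ≤ r := by rw [znorm_zero]; linarith
      rw [if_pos h0r, if_pos rfl, if_pos rfl, if_neg (by simp)]
      norm_num
    · rw [if_neg hy]
      by_cases h : znorm y ≤ r
      · rw [if_pos h, if_pos (⟨hy, h⟩ : y ≠ 0 ∧ znorm y ≤ r), if_neg hy]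
        norm_num
      · rw [if_neg h, if_neg (fun hc : y ≠ 0 ∧ znorm y ≤ r => h hc.2), if_neg hy]
        norm_num
  calc ∑ y ∈ u, (if znorm y ≤ r then (if y = 0 then (1:ℝ) else znorm y ^ (-s)) else 0)
      ≤ ∑ y ∈ u, ((if y = 0 then (1:ℝ) else 0)
          + (if y ≠ 0 ∧ znorm y ≤ r then znorm y ^ (-s) else 0)) := Finset.sum_le_sum hpt
    _ = (∑ y ∈ u, if y = 0 then (1:ℝ) else 0)
          + ∑ y ∈ u, (if y ≠ 0 ∧ znorm y ≤ r then znorm y ^ (-s) else 0) := Finset.sum_add_distrib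
    _ ≤ 1 + K * r^((d:ℝ)-s) := by
        apply add_le_add _ (hK r hr u)
        rw [Finset.sum_ite_eq' u 0 (fun _ => (1:ℝ))]
        split_ifs <;> norm_num

/-- Lemma 2.1 (first case): convolution estimate for functions decaying like
`‖x‖^{-a}` and `‖x‖^{-b}` with `b ≤ a < d < a + b`. -/
theorem stmt0 (d : ℕ) (hd : 2 ≤ d) (a b C₁ C₂ : ℝ) (hb : 0 < b) (hba : b ≤ a)
    (had : a < d) (habd : (d : ℝ) < a + b) (f g : (Fin d → ℤ) → ℝ)
    (hf : ∀ x : Fin d → ℤ, x ≠ 0 → |f x| ≤ C₁ * znorm x ^ (-a))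
    (hg : ∀ x : Fin d → ℤ, x ≠ 0 → |g x| ≤ C₂ * znorm x ^ (-b))
    (hf0 : |f 0| ≤ C₁) (hg0 : |g 0| ≤ C₂) :
    ∃ C : ℝ, ∀ x : Fin d → ℤ, x ≠ 0 →
      |∑' y : Fin d → ℤ, f y * g (x - y)| ≤ C * znorm x ^ ((d : ℝ) - (a + b)) := by
  classical
  have hC₁ : 0 ≤ C₁ := le_trans (abs_nonneg _) hf0
  have hC₂ : 0 ≤ C₂ := le_trans (abs_nonneg _) hg0
  have ha0 : 0 < a := lt_of_lt_of_le hb hba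
  have hd0 : (0:ℝ) ≤ (d:ℝ) := Nat.cast_nonneg d
  obtain ⟨KA, hKA0, hKA⟩ := ballSumW (d := d) a ha0.le had
  obtain ⟨KB, hKB0, hKB⟩ := ballSumW (d := d) b hb.le (lt_of_le_of_lt hba had)
  obtain ⟨KT, hKT0, hKT⟩ := tailSum (d := d) (a+b) (by linarith) habd
  set t : ℝ := (d:ℝ) - (a+b) with ht
  set D : ℝ := (2:ℝ)^(a+b) with hD
  have hD0 : 0 < D := Real.rpow_pos_of_pos two_pos _
  refine ⟨C₁*C₂*(D*(2 + KA + KB + 2*KT)), ?_⟩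
  intro x hx
  set R := znorm x with hRdef
  have hR1 : 1 ≤ R := one_le_znorm' hx
  have hR0 : 0 < R := by linarith
  set r := R/2 with hrdef
  have hr2 : 1/2 ≤ r := by rw [hrdef]; linarith
  have hr0 : 0 < r := by linarith
  have hRt0 : 0 < R ^ t := Real.rpow_pos_of_pos hR0 _
  have hrz : ∀ z : ℝ, r ^ z = (2:ℝ)^(-z) * R^z := by
    intro z
    rw [hrdef, Real.div_rpow hR0.le (by norm_num : (0:ℝ) ≤ 2),
      Real.rpow_neg (by norm_num : (0:ℝ) ≤ 2)]
    ring
  have h2le : ∀ z z' : ℝ, z ≤ z' → (2:ℝ)^z ≤ 2^z' :=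
    fun z z' h => Real.rpow_le_rpow_of_exponent_le one_le_two h
  have hRle : ∀ z z' : ℝ, z ≤ z' → R^z ≤ R^z' :=
    fun z z' h => Real.rpow_le_rpow_of_exponent_le hR1 h
  have hpc1 : r ^ (-b) ≤ D * R ^ t := by
    rw [hrz (-b), neg_neg, hD]
    exact mul_le_mul (h2le b (a+b) (by linarith)) (hRle (-b) t (by rw [ht]; linarith))
      (Real.rpow_nonneg hR0.le _) (Real.rpow_nonneg (by norm_num) _)
  have hpc3 : r ^ (-a) ≤ D * R ^ t := by
    rw [hrz (-a), neg_neg, hD]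
    exact mul_le_mul (h2le a (a+b) (by linarith)) (hRle (-a) t (by rw [ht]; linarith))
      (Real.rpow_nonneg hR0.le _) (Real.rpow_nonneg (by norm_num) _)
  have hpct : r ^ t ≤ D * R ^ t := by
    rw [hrz t, hD]
    exact mul_le_mul_of_nonneg_right (h2le (-t) (a+b) (by rw [ht]; linarith))
      (Real.rpow_nonneg hR0.le _)
  -- pointwise bound helpers
  have hfw : ∀ y : Fin d → ℤ, |f y| ≤ C₁ * (if y = 0 then (1:ℝ) else znorm y ^ (-a)) := by
    intro y
    by_cases hy : y = 0
    · subst hy; rw [if_pos rfl, mul_one]; exact hf0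
    · rw [if_neg hy]; exact hf y hy
  have hgw : ∀ z : Fin d → ℤ, |g z| ≤ C₂ * (if z = 0 then (1:ℝ) else znorm z ^ (-b)) := by
    intro z
    by_cases hz : z = 0
    · subst hz; rw [if_pos rfl, mul_one]; exact hg0
    · rw [if_neg hz]; exact hg z hz
  have hwnn : ∀ (y : Fin d → ℤ) (s : ℝ), 0 ≤ (if y = 0 then (1:ℝ) else znorm y ^ s) := by
    intro y s
    split_ifs
    · norm_num
    · exact Real.rpow_nonneg (znorm_nonneg' y) _
  have htri : ∀ y : Fin d → ℤ, znorm y ≤ r → r ≤ znorm (x - y) := by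
    intro y h
    have h2 := znorm_sub_ge x y
    rw [← hRdef] at h2
    rw [hrdef] at h ⊢
    linarith
  have htri' : ∀ y : Fin d → ℤ, znorm (x - y) ≤ r → r ≤ znorm y := by
    intro y h
    have h2 := znorm_sub_ge x (x - y)
    rw [← hRdef, sub_sub_cancel] at h2
    rw [hrdef] at h ⊢
    linarith
  -- the four majorants
  set m1 : (Fin d → ℤ) → ℝ := fun y =>
    if znorm y ≤ r then (if y = 0 then (1:ℝ) else znorm y ^ (-a)) * r^(-b) else 0 with hm1
  set m2 : (Fin d → ℤ) → ℝ := fun y =>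
    if r < znorm y ∧ znorm (x - y) ≤ r then
      r^(-a) * (if x - y = 0 then (1:ℝ) else znorm (x - y) ^ (-b)) else 0 with hm2
  set m3 : (Fin d → ℤ) → ℝ := fun y =>
    if r < znorm y ∧ r < znorm (x - y) ∧ znorm y ≤ znorm (x - y) then
      znorm y ^ (-(a+b)) else 0 with hm3
  set m4 : (Fin d → ℤ) → ℝ := fun y =>
    if r < znorm y ∧ r < znorm (x - y) ∧ znorm (x - y) < znorm y then
      znorm (x - y) ^ (-(a+b)) else 0 with hm4
  have hm1nn : ∀ y, 0 ≤ m1 y := by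
    intro y; simp only [hm1]
    split_ifs
    all_goals
      first
        | exact le_rfl
        | exact Real.rpow_nonneg (znorm_nonneg' _) _
        | exact mul_nonneg zero_le_one (Real.rpow_nonneg hr0.le _)
        | exact mul_nonneg (Real.rpow_nonneg (znorm_nonneg' _) _) (Real.rpow_nonneg hr0.le _)
        | exact mul_nonneg (Real.rpow_nonneg hr0.le _) zero_le_one
        | exact mul_nonneg (Real.rpow_nonneg hr0.le _) (Real.rpow_nonneg (znorm_nonneg' _) _)
  have hm2nn : ∀ y, 0 ≤ m2 y := by
    intro y; simp only [hm2]
    split_ifs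
    all_goals
      first
        | exact le_rfl
        | exact Real.rpow_nonneg (znorm_nonneg' _) _
        | exact mul_nonneg zero_le_one (Real.rpow_nonneg hr0.le _)
        | exact mul_nonneg (Real.rpow_nonneg (znorm_nonneg' _) _) (Real.rpow_nonneg hr0.le _)
        | exact mul_nonneg (Real.rpow_nonneg hr0.le _) zero_le_one
        | exact mul_nonneg (Real.rpow_nonneg hr0.le _) (Real.rpow_nonneg (znorm_nonneg' _) _)
  have hm3nn : ∀ y, 0 ≤ m3 y := by
    intro y; simp only [hm3]
    split_ifs
    all_goals
      first
        | exact le_rfl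
        | exact Real.rpow_nonneg (znorm_nonneg' _) _
        | exact mul_nonneg zero_le_one (Real.rpow_nonneg hr0.le _)
        | exact mul_nonneg (Real.rpow_nonneg (znorm_nonneg' _) _) (Real.rpow_nonneg hr0.le _)
        | exact mul_nonneg (Real.rpow_nonneg hr0.le _) zero_le_one
        | exact mul_nonneg (Real.rpow_nonneg hr0.le _) (Real.rpow_nonneg (znorm_nonneg' _) _)
  have hm4nn : ∀ y, 0 ≤ m4 y := by
    intro y; simp only [hm4]
    split_ifs
    all_goals
      first
        | exact le_rfl
        | exact Real.rpow_nonneg (znorm_nonneg' _) _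
        | exact mul_nonneg zero_le_one (Real.rpow_nonneg hr0.le _)
        | exact mul_nonneg (Real.rpow_nonneg (znorm_nonneg' _) _) (Real.rpow_nonneg hr0.le _)
        | exact mul_nonneg (Real.rpow_nonneg hr0.le _) zero_le_one
        | exact mul_nonneg (Real.rpow_nonneg hr0.le _) (Real.rpow_nonneg (znorm_nonneg' _) _)
  -- pointwise domination
  have hpoint : ∀ y : Fin d → ℤ, |f y * g (x - y)| ≤ C₁*C₂*(m1 y + m2 y + m3 y + m4 y) := by
    intro y
    rw [abs_mul]
    have hfin : ∀ z : ℝ, |f y| * |g (x - y)| ≤ C₁*C₂*z →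
        z ≤ m1 y + m2 y + m3 y + m4 y → |f y| * |g (x - y)| ≤ C₁*C₂*(m1 y + m2 y + m3 y + m4 y) := by
      intro z h1 h2
      exact h1.trans (mul_le_mul_of_nonneg_left h2 (by positivity))
    by_cases h1 : znorm y ≤ r
    · have hxy : r ≤ znorm (x - y) := htri y h1
      have hxy0 : x - y ≠ 0 := ne_zero_of_lt_znorm (lt_of_lt_of_le hr0 hxy)
      have hg' : |g (x - y)| ≤ C₂ * r^(-b) := by
        refine (hg _ hxy0).trans ?_
        exact mul_le_mul_of_nonneg_left
          (Real.rpow_le_rpow_of_nonpos hr0 hxy (by linarith)) hC₂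
      have hprod : |f y| * |g (x - y)| ≤
          (C₁ * (if y = 0 then (1:ℝ) else znorm y ^ (-a))) * (C₂ * r^(-b)) :=
        mul_le_mul (hfw y) hg' (abs_nonneg _) (mul_nonneg hC₁ (hwnn y _))
      refine hfin ((if y = 0 then (1:ℝ) else znorm y ^ (-a)) * r^(-b)) (by
        refine hprod.trans (le_of_eq ?_); ring) ?_
      have : m1 y = (if y = 0 then (1:ℝ) else znorm y ^ (-a)) * r^(-b) := by
        simp only [hm1]; exact if_pos h1
      rw [← this]
      linarith [hm2nn y, hm3nn y, hm4nn y]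
    · push_neg at h1
      have hy0 : y ≠ 0 := ne_zero_of_lt_znorm (hr0.trans h1)
      by_cases h2 : znorm (x - y) ≤ r
      · have hf' : |f y| ≤ C₁ * r^(-a) := by
          refine (hf y hy0).trans ?_
          exact mul_le_mul_of_nonneg_left
            (Real.rpow_le_rpow_of_nonpos hr0 h1.le (by linarith)) hC₁
        have hprod : |f y| * |g (x - y)| ≤
            (C₁ * r^(-a)) * (C₂ * (if x - y = 0 then (1:ℝ) else znorm (x - y) ^ (-b))) :=
          mul_le_mul hf' (hgw (x - y)) (abs_nonneg _)
            (mul_nonneg hC₁ (Real.rpow_nonneg hr0.le _))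
        refine hfin (r^(-a) * (if x - y = 0 then (1:ℝ) else znorm (x - y) ^ (-b))) (by
          refine hprod.trans (le_of_eq ?_); ring) ?_
        have : m2 y = r^(-a) * (if x - y = 0 then (1:ℝ) else znorm (x - y) ^ (-b)) := by
          simp only [hm2]; exact if_pos ⟨h1, h2⟩
        rw [← this]
        linarith [hm1nn y, hm3nn y, hm4nn y]
      · push_neg at h2
        have hxy0 : x - y ≠ 0 := ne_zero_of_lt_znorm (hr0.trans h2)
        have hypos : 0 < znorm y := hr0.trans h1
        have hxypos : 0 < znorm (x - y) := hr0.trans h2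
        have hprod : |f y| * |g (x - y)| ≤
            (C₁ * znorm y ^ (-a)) * (C₂ * znorm (x - y) ^ (-b)) :=
          mul_le_mul (hf y hy0) (hg _ hxy0) (abs_nonneg _)
            (mul_nonneg hC₁ (Real.rpow_nonneg (znorm_nonneg' _) _))
        by_cases h3 : znorm y ≤ znorm (x - y)
        · refine hfin (znorm y ^ (-(a+b))) ?_ ?_
          · have hb' : znorm (x - y) ^ (-b) ≤ znorm y ^ (-b) :=
              Real.rpow_le_rpow_of_nonpos hypos h3 (by linarith)
            have hcomb : znorm y ^ (-a) * znorm y ^ (-b) = znorm y ^ (-(a+b)) := by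
              rw [← Real.rpow_add hypos]; ring_nf
            calc |f y| * |g (x - y)| ≤ (C₁ * znorm y ^ (-a)) * (C₂ * znorm (x - y) ^ (-b)) := hprod
              _ ≤ (C₁ * znorm y ^ (-a)) * (C₂ * znorm y ^ (-b)) := by
                  apply mul_le_mul_of_nonneg_left (mul_le_mul_of_nonneg_left hb' hC₂)
                  exact mul_nonneg hC₁ (Real.rpow_nonneg (znorm_nonneg' _) _)
              _ = C₁*C₂*(znorm y ^ (-a) * znorm y ^ (-b)) := by ring
              _ = C₁*C₂*(znorm y ^ (-(a+b))) := by rw [hcomb]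
          · have : m3 y = znorm y ^ (-(a+b)) := by
              simp only [hm3]; exact if_pos ⟨h1, h2, h3⟩
            rw [← this]
            linarith [hm1nn y, hm2nn y, hm4nn y]
        · push_neg at h3
          refine hfin (znorm (x - y) ^ (-(a+b))) ?_ ?_
          · have ha' : znorm y ^ (-a) ≤ znorm (x - y) ^ (-a) :=
              Real.rpow_le_rpow_of_nonpos hxypos h3.le (by linarith)
            have hcomb : znorm (x - y) ^ (-a) * znorm (x - y) ^ (-b)
                = znorm (x - y) ^ (-(a+b)) := by
              rw [← Real.rpow_add hxypos]; ring_nf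
            calc |f y| * |g (x - y)| ≤ (C₁ * znorm y ^ (-a)) * (C₂ * znorm (x - y) ^ (-b)) := hprod
              _ ≤ (C₁ * znorm (x - y) ^ (-a)) * (C₂ * znorm (x - y) ^ (-b)) := by
                  apply mul_le_mul_of_nonneg_right (mul_le_mul_of_nonneg_left ha' hC₁)
                  exact mul_nonneg hC₂ (Real.rpow_nonneg (znorm_nonneg' _) _)
              _ = C₁*C₂*(znorm (x - y) ^ (-a) * znorm (x - y) ^ (-b)) := by ring
              _ = C₁*C₂*(znorm (x - y) ^ (-(a+b))) := by rw [hcomb]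
          · have : m4 y = znorm (x - y) ^ (-(a+b)) := by
              simp only [hm4]; exact if_pos ⟨h1, h2, h3⟩
            rw [← this]
            linarith [hm1nn y, hm2nn y, hm3nn y]
  -- injectivity for the change of variables
  have himg : ∀ (u : Finset (Fin d → ℤ)) (F : (Fin d → ℤ) → ℝ),
      ∑ y ∈ u, F (x - y) = ∑ z ∈ u.image (fun y => x - y), F z := by
    intro u F
    rw [Finset.sum_image (fun y _ y' _ h => sub_right_inj.mp h)]
  -- sum bounds for each majorant
  have hS1 : ∀ u : Finset (Fin d → ℤ), ∑ y ∈ u, m1 y ≤ (1 + KA * r^((d:ℝ)-a)) * r^(-b) := by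
    intro u
    have heq : ∀ y, m1 y
        = (if znorm y ≤ r then (if y = 0 then (1:ℝ) else znorm y ^ (-a)) else 0) * r^(-b) := by
      intro y; simp only [hm1]; split_ifs <;> ring
    calc ∑ y ∈ u, m1 y
        = (∑ y ∈ u, (if znorm y ≤ r then (if y = 0 then (1:ℝ) else znorm y ^ (-a)) else 0))
            * r^(-b) := by rw [Finset.sum_mul]; exact Finset.sum_congr rfl (fun y _ => heq y)
      _ ≤ (1 + KA * r^((d:ℝ)-a)) * r^(-b) :=
          mul_le_mul_of_nonneg_right (hKA r hr2 u) (Real.rpow_nonneg hr0.le _)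
  have hS2 : ∀ u : Finset (Fin d → ℤ), ∑ y ∈ u, m2 y ≤ (1 + KB * r^((d:ℝ)-b)) * r^(-a) := by
    intro u
    have hptw : ∀ y ∈ u, m2 y
        ≤ (if znorm (x - y) ≤ r then (if x - y = 0 then (1:ℝ) else znorm (x - y) ^ (-b)) else 0)
            * r^(-a) := by
      intro y _
      simp only [hm2]
      by_cases hc : r < znorm y ∧ znorm (x - y) ≤ r
      · rw [if_pos hc, if_pos hc.2]; exact le_of_eq (mul_comm _ _)
      · rw [if_neg hc]
        by_cases hc2 : znorm (x - y) ≤ r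
        · rw [if_pos hc2]; exact mul_nonneg (hwnn _ _) (Real.rpow_nonneg hr0.le _)
        · rw [if_neg hc2]; norm_num
    calc ∑ y ∈ u, m2 y
        ≤ ∑ y ∈ u, (if znorm (x - y) ≤ r then
            (if x - y = 0 then (1:ℝ) else znorm (x - y) ^ (-b)) else 0) * r^(-a) :=
          Finset.sum_le_sum hptw
      _ = (∑ y ∈ u, (if znorm (x - y) ≤ r then
            (if x - y = 0 then (1:ℝ) else znorm (x - y) ^ (-b)) else 0)) * r^(-a) := by
          rw [Finset.sum_mul]
      _ = (∑ z ∈ u.image (fun y => x - y), (if znorm z ≤ r then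
            (if z = 0 then (1:ℝ) else znorm z ^ (-b)) else 0)) * r^(-a) := by
          rw [himg u (fun z => if znorm z ≤ r then (if z = 0 then (1:ℝ) else znorm z ^ (-b)) else 0)]
      _ ≤ (1 + KB * r^((d:ℝ)-b)) * r^(-a) :=
          mul_le_mul_of_nonneg_right (hKB r hr2 _) (Real.rpow_nonneg hr0.le _)
  have hS3 : ∀ u : Finset (Fin d → ℤ), ∑ y ∈ u, m3 y ≤ KT * r^t := by
    intro u
    have hptw : ∀ y ∈ u, m3 y ≤ (if r < znorm y then znorm y ^ (-(a+b)) else 0) := by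
      intro y _
      simp only [hm3]
      by_cases hc : r < znorm y ∧ r < znorm (x - y) ∧ znorm y ≤ znorm (x - y)
      · rw [if_pos hc, if_pos hc.1]
      · rw [if_neg hc]
        split_ifs
        · exact Real.rpow_nonneg (znorm_nonneg' _) _
        · exact le_rfl
    exact (Finset.sum_le_sum hptw).trans (hKT r hr2 u)
  have hS4 : ∀ u : Finset (Fin d → ℤ), ∑ y ∈ u, m4 y ≤ KT * r^t := by
    intro u
    have hptw : ∀ y ∈ u, m4 y ≤ (if r < znorm (x - y) then znorm (x - y) ^ (-(a+b)) else 0) := by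
      intro y _
      simp only [hm4]
      by_cases hc : r < znorm y ∧ r < znorm (x - y) ∧ znorm (x - y) < znorm y
      · rw [if_pos hc, if_pos hc.2.1]
      · rw [if_neg hc]
        split_ifs
        · exact Real.rpow_nonneg (znorm_nonneg' _) _
        · exact le_rfl
    calc ∑ y ∈ u, m4 y
        ≤ ∑ y ∈ u, (if r < znorm (x - y) then znorm (x - y) ^ (-(a+b)) else 0) :=
          Finset.sum_le_sum hptw
      _ = ∑ z ∈ u.image (fun y => x - y), (if r < znorm z then znorm z ^ (-(a+b)) else 0) :=
          himg u (fun z => if r < znorm z then znorm z ^ (-(a+b)) else 0)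
      _ ≤ KT * r^t := hKT r hr2 _
  -- combine exponent arithmetic
  have hprod1 : r^((d:ℝ)-a) * r^(-b) = r^t := by
    rw [← Real.rpow_add hr0, ht]; ring_nf
  have hprod2 : r^((d:ℝ)-b) * r^(-a) = r^t := by
    rw [← Real.rpow_add hr0, ht]; ring_nf
  have e1 : (1 + KA * r^((d:ℝ)-a)) * r^(-b) ≤ D*R^t + KA*(D*R^t) := by
    have : (1 + KA * r^((d:ℝ)-a)) * r^(-b) = r^(-b) + KA*(r^((d:ℝ)-a) * r^(-b)) := by ring
    rw [this, hprod1]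
    exact add_le_add hpc1 (mul_le_mul_of_nonneg_left hpct hKA0)
  have e2 : (1 + KB * r^((d:ℝ)-b)) * r^(-a) ≤ D*R^t + KB*(D*R^t) := by
    have : (1 + KB * r^((d:ℝ)-b)) * r^(-a) = r^(-a) + KB*(r^((d:ℝ)-b) * r^(-a)) := by ring
    rw [this, hprod2]
    exact add_le_add hpc3 (mul_le_mul_of_nonneg_left hpct hKB0)
  have e3 : KT * r^t ≤ KT*(D*R^t) := mul_le_mul_of_nonneg_left hpct hKT0
  -- the key finite-sum bound
  have key : ∀ u : Finset (Fin d → ℤ),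
      ∑ y ∈ u, |f y * g (x - y)| ≤ C₁*C₂*(D*(2 + KA + KB + 2*KT)) * R^t := by
    intro u
    calc ∑ y ∈ u, |f y * g (x - y)|
        ≤ ∑ y ∈ u, C₁*C₂*(m1 y + m2 y + m3 y + m4 y) :=
          Finset.sum_le_sum (fun y _ => hpoint y)
      _ = C₁*C₂*((∑ y ∈ u, m1 y) + (∑ y ∈ u, m2 y) + (∑ y ∈ u, m3 y) + (∑ y ∈ u, m4 y)) := by
          rw [← Finset.mul_sum]
          congr 1
          rw [← Finset.sum_add_distrib, ← Finset.sum_add_distrib, ← Finset.sum_add_distrib]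
      _ ≤ C₁*C₂*((D*R^t + KA*(D*R^t)) + (D*R^t + KB*(D*R^t)) + KT*(D*R^t) + KT*(D*R^t)) := by
          apply mul_le_mul_of_nonneg_left _ (by positivity)
          exact add_le_add (add_le_add (add_le_add ((hS1 u).trans' le_rfl |>.trans e1 |>.trans_eq rfl |>.trans le_rfl) ((hS2 u).trans e2)) ((hS3 u).trans e3)) ((hS4 u).trans e3)
      _ = C₁*C₂*(D*(2 + KA + KB + 2*KT)) * R^t := by ring
  -- conclude via tsum
  have hsum : Summable (fun y : Fin d → ℤ => |f y * g (x - y)|) :=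
    summable_of_sum_le (fun y => abs_nonneg _) key
  have h1 : |∑' y : Fin d → ℤ, f y * g (x - y)| ≤ ∑' y : Fin d → ℤ, |f y * g (x - y)| := by
    have hnorm : Summable (fun y : Fin d → ℤ => ‖f y * g (x - y)‖) := by
      simpa only [Real.norm_eq_abs] using hsum
    have := norm_tsum_le_tsum_norm hnorm
    simpa only [Real.norm_eq_abs] using this
  have h2 : ∑' y : Fin d → ℤ, |f y * g (x - y)| ≤ C₁*C₂*(D*(2 + KA + KB + 2*KT)) * R^t :=
    Summable.tsum_le_of_sum_le hsum key
  linarith
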